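/- Let W ⊆ ℝ², v ∈ S¹, δ ∈ (0,1), and let γ : I → ℝ² be a C¹ curve satisfying γ'(t) ∈ Ĉ(v,δ) for all t ∈ I. Then the Lebesgue measure of γ⁻¹(W) is at most diam_v(W)/(1−δ). -/

import Mathlib

open MeasureTheory Filter Metric Set Topology RealInnerProductSpace ENNReal NNReal

noncomputable section

/-- The Euclidean plane. -/
abbrev E2 := EuclideanSpace ℝ (Fin 2)

/-- `IsC1Curve a b γ γ'` : `γ` restricted to the compact nondegenerate interval `[a,b]`
is a C¹ curve with (one-sided at endpoints) derivative `γ'`, continuous and of unit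
norm on `[a,b]`. -/
def IsC1Curve (a b : ℝ) (γ γ' : ℝ → E2) : Prop :=
  a < b ∧ ContinuousOn γ' (Set.Icc a b) ∧
    (∀ t ∈ Set.Icc a b, HasDerivWithinAt γ (γ' t) (Set.Icc a b) t) ∧
    (∀ t ∈ Set.Icc a b, ‖γ' t‖ = 1)

/-- The double-sided cone `Ĉ(w,α) = {v ∈ S¹ : |⟨v,w⟩| ≥ 1 − α}`. -/
def hatC (w : E2) (α : ℝ) : Set E2 :=
  {v ∈ sphere (0:E2) 1 | 1 - α ≤ |⟪v, w⟫|}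

/-- `diam_v(W) = sup {⟨y − x, v⟩ : x, y ∈ W}` as an extended nonnegative real. -/
def diamv (v : E2) (W : Set E2) : ℝ≥0∞ :=
  ⨆ x ∈ W, ⨆ y ∈ W, ENNReal.ofReal ⟪y - x, v⟫

lemma le_diamv {v : E2} {W : Set E2} {x y : E2} (hx : x ∈ W) (hy : y ∈ W) :
    ENNReal.ofReal ⟪y - x, v⟫ ≤ diamv v W :=
  le_iSup₂_of_le x hx (le_iSup₂_of_le y hy le_rfl)

/-- Lower mean-value bound. -/
lemma key_mvt {a b c : ℝ} {f f' : ℝ → ℝ}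
    (hf : ∀ t ∈ Set.Icc a b, HasDerivWithinAt f (f' t) (Set.Icc a b) t)
    (hc : ∀ t ∈ Set.Icc a b, c ≤ f' t) :
    ∀ s ∈ Set.Icc a b, ∀ t ∈ Set.Icc a b, s ≤ t → c * (t - s) ≤ f t - f s := by
  intro s hs t ht hst
  set g : ℝ → ℝ := fun x => f x - c * x with hg
  have hmono : MonotoneOn g (Set.Icc a b) := by
    apply monotoneOn_of_hasDerivWithinAt_nonneg (f' := fun x => f' x - c) (convex_Icc a b)
    · exact fun x hx => (hf x hx).continuousWithinAt.sub
        (continuousWithinAt_const.mul continuousWithinAt_id)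
    · intro x hx
      have hx' : x ∈ Set.Icc a b := interior_subset hx
      have := ((hf x hx').sub (((hasDerivAt_id x).const_mul c).hasDerivWithinAt)).mono
        (interior_subset : interior (Set.Icc a b) ⊆ _)
      simp only [mul_one] at this
      convert this using 1 <;> rfl
    · intro x hx
      have := hc x (interior_subset hx)
      linarith
  have := hmono hs ht hst
  simp only [hg] at this
  linarith

/-- Constant sign of a continuous function bounded away from 0 on an interval. -/
lemma sign_const {a b c : ℝ} {h : ℝ → ℝ} (hc : 0 < c)
    (hcont : ContinuousOn h (Set.Icc a b))
    (habs : ∀ t ∈ Set.Icc a b, c ≤ |h t|) :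
    (∀ t ∈ Set.Icc a b, c ≤ h t) ∨ (∀ t ∈ Set.Icc a b, h t ≤ -c) := by
  rcases le_or_gt a b with hab | hab
  swap
  · left; intro t ht; exact absurd (ht.1.trans ht.2) (not_le.mpr hab)
  have key : ∀ s ∈ Set.Icc a b, ∀ t ∈ Set.Icc a b, 0 < h s → 0 < h t := by
    intro s hs t ht hhs
    by_contra hcon
    have hht : h t ≤ 0 := le_of_not_gt hcon
    have hsub : Set.uIcc s t ⊆ Set.Icc a b := by
      rw [← Set.uIcc_of_le hab, Set.uIcc_subset_uIcc_iff_mem, Set.uIcc_of_le hab]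
      exact ⟨hs, ht⟩
    have := intermediate_value_uIcc (hcont.mono hsub)
    have h0 : (0:ℝ) ∈ Set.uIcc (h s) (h t) := by
      rw [Set.mem_uIcc]; right; exact ⟨hht, le_of_lt hhs⟩
    obtain ⟨u, hu, hu0⟩ := this h0
    have := habs u (hsub hu)
    rw [hu0] at this
    simp at this; linarith
  rcases le_or_gt (h a) 0 with hha | hha
  · right
    intro t ht
    have := habs t ht
    rcases abs_cases (h t) with ⟨heq, _⟩ | ⟨heq, _⟩
    · -- h t ≥ 0; then h t > 0, but h a ≤ 0 : IVT contradiction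
      have hht : 0 < h t := by rw [heq] at this; linarith
      have haa : a ∈ Set.Icc a b := Set.left_mem_Icc.mpr hab
      have := key t ht a haa hht
      linarith
    · linarith
  · left
    intro t ht
    have haa : a ∈ Set.Icc a b := Set.left_mem_Icc.mpr hab
    have h' := key a haa t ht hha
    have := habs t ht
    rcases abs_cases (h t) with ⟨heq, _⟩ | ⟨heq, _⟩
    · linarith
    · linarith

/-- If `γ` is a C¹ curve with `γ'(t) ∈ Ĉ(v,δ)` for all `t`, then the
Lebesgue measure of `γ⁻¹(W)` is at most `diam_v(W)/(1−δ)`. -/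
theorem stmt17 (W : Set E2) (v : E2) (hv : v ∈ sphere (0:E2) 1)
    (δ : ℝ) (hδ : δ ∈ Set.Ioo (0:ℝ) 1)
    (a b : ℝ) (γ γ' : ℝ → E2) (hγ : IsC1Curve a b γ γ')
    (hdir : ∀ t ∈ Set.Icc a b, γ' t ∈ hatC v δ) :
    volume (γ ⁻¹' W ∩ Set.Icc a b) ≤ diamv v W / ENNReal.ofReal (1 - δ) := by
  obtain ⟨hab, hcont', hderiv, _⟩ := hγ
  have hδ1 : 0 < 1 - δ := by linarith [hδ.2]
  set h : ℝ → ℝ := fun t => ⟪γ' t, v⟫ with hh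
  have habs : ∀ t ∈ Set.Icc a b, 1 - δ ≤ |h t| := fun t ht => (hdir t ht).2
  have hcg : ∀ t ∈ Set.Icc a b,
      HasDerivWithinAt (fun x => ⟪γ x, v⟫) (h t) (Set.Icc a b) t := by
    intro t ht
    have := (hderiv t ht).inner ℝ (hasDerivWithinAt_const t (Set.Icc a b) v)
    simpa only [inner_zero_right, zero_add] using this
  have hcont : ContinuousOn h (Set.Icc a b) :=
    hcont'.inner continuousOn_const
  -- key inequality: for s ≤ t in γ⁻¹ W ∩ Icc, ofReal ((1-δ)*(t-s)) ≤ diamv v W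
  have main : ∀ s ∈ γ ⁻¹' W ∩ Set.Icc a b, ∀ t ∈ γ ⁻¹' W ∩ Set.Icc a b, s ≤ t →
      ENNReal.ofReal ((1 - δ) * (t - s)) ≤ diamv v W := by
    intro s hs t ht hst
    rcases sign_const hδ1 hcont habs with hpos | hneg
    · have := key_mvt hcg hpos s hs.2 t ht.2 hst
      have hle : (1 - δ) * (t - s) ≤ ⟪γ t - γ s, v⟫ := by
        rw [inner_sub_left]; linarith
      exact (ENNReal.ofReal_le_ofReal hle).trans (le_diamv hs.1 ht.1)
    · have hcg' : ∀ u ∈ Set.Icc a b,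
          HasDerivWithinAt (fun x => -⟪γ x, v⟫) (-h u) (Set.Icc a b) u :=
        fun u hu => (hcg u hu).neg
      have hpos' : ∀ u ∈ Set.Icc a b, 1 - δ ≤ -h u := fun u hu => by
        have := hneg u hu; linarith
      have := key_mvt hcg' hpos' s hs.2 t ht.2 hst
      have hle : (1 - δ) * (t - s) ≤ ⟪γ s - γ t, v⟫ := by
        rw [inner_sub_left]; linarith
      exact (ENNReal.ofReal_le_ofReal hle).trans (le_diamv ht.1 hs.1)
  refine (Real.volume_le_diam _).trans (EMetric.diam_le ?_)
  intro s hs t ht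
  rw [ENNReal.le_div_iff_mul_le (Or.inl (ENNReal.ofReal_pos.mpr hδ1).ne') (Or.inl ENNReal.ofReal_ne_top)]
  rcases le_total s t with hst | hst
  · have := main s hs t ht hst
    calc edist s t * ENNReal.ofReal (1 - δ)
        = ENNReal.ofReal ((1 - δ) * (t - s)) := by
          rw [edist_dist, Real.dist_eq, abs_of_nonpos (by linarith), ← ENNReal.ofReal_mul (by linarith)]
          ring_nf
      _ ≤ diamv v W := this
  · have := main t ht s hs hst
    calc edist s t * ENNReal.ofReal (1 - δ)
        = ENNReal.ofReal ((1 - δ) * (s - t)) := by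
          rw [edist_dist, Real.dist_eq, abs_of_nonneg (by linarith), ← ENNReal.ofReal_mul (by linarith)]
          ring_nf
      _ ≤ diamv v W := this

end
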